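/- There is no two-state alternating finite automaton over a one-letter alphabet accepting the language of words of positive even length. Precisely: let X be a type with exactly two elements and A a type with exactly one element; for every transition function δ : X → A → Set (Set X) with each δ x a upward closed, every upward closed initial configuration I : Set (Set X), and every set of accepting states Fin ⊆ X, the accepted language {w : List A | ∃ S ∈ conf(w), S ⊆ Fin} is not equal to {w : List A | w.length > 0 ∧ Even w.length}. -/

import Mathlib

universe u

/-- One-step successor configuration of an alternating finite automaton:
`step U a = {V | ∃ W ∈ U, ∀ x ∈ W, ∃ Z ∈ δ x a, Z ⊆ V}`. -/
def afaStep {X A : Type u} (δ : X → A → Set (Set X)) (U : Set (Set X)) (a : A) :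
    Set (Set X) :=
  {V | ∃ W ∈ U, ∀ x ∈ W, ∃ Z ∈ δ x a, Z ⊆ V}

/-- Configuration of an AFA after reading a word: `conf [] = I` and
`conf (w ++ [a]) = step (conf w) a`. -/
def afaConf {X A : Type u} (δ : X → A → Set (Set X)) (I : Set (Set X))
    (w : List A) : Set (Set X) :=
  w.foldl (afaStep δ) I

/-- there is no two-state alternating finite automaton over a one-letter
alphabet accepting the language of words of positive even length: for every type `X`
with exactly two elements, every type `A` with exactly one element, every transition
function `δ` with upward closed values, every upward closed initial configuration `I`,
and every set `F` of accepting states, the accepted language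
`{w | ∃ S ∈ conf w, S ⊆ F}` differs from `{w | w.length > 0 ∧ Even w.length}`. -/
theorem no_two_state_afa_for_positive_even
    (X A : Type u) (hX : Nat.card X = 2) (hA : Nat.card A = 1)
    (δ : X → A → Set (Set X))
    (hδup : ∀ (x : X) (a : A) (S S' : Set X), S ∈ δ x a → S ⊆ S' → S' ∈ δ x a)
    (I : Set (Set X))
    (hIup : ∀ S S' : Set X, S ∈ I → S ⊆ S' → S' ∈ I)
    (F : Set X) :
    {w : List A | ∃ S ∈ afaConf δ I w, S ⊆ F}
      ≠ {w : List A | 0 < w.length ∧ Even w.length} := by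
  
  intro heq
  -- an element of A
  obtain ⟨⟨a0⟩, -⟩ := Nat.card_pos_iff.mp (by rw [hA]; exact one_pos)
  -- X has at most two elements (stated as: two elements differing from a third are equal)
  obtain ⟨p, q, hpq, hcov⟩ := Nat.card_eq_two_iff.mp hX
  have hcover : ∀ x : X, x = p ∨ x = q := by
    intro x
    have : x ∈ ({p, q} : Set X) := hcov ▸ Set.mem_univ x
    simpa using this
  have key2 : ∀ x y z : X, x ≠ z → y ≠ z → x = y := by
    intro x y z hx hy
    rcases hcover x with rfl | rfl <;> rcases hcover y with rfl | rfl <;>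
      rcases hcover z with rfl | rfl <;> tauto
  -- incomparable pairs share their "partner"
  have L2 : ∀ U V W : Set X, ¬ U ⊆ V → ¬ V ⊆ U → ¬ W ⊆ V → ¬ V ⊆ W → U = W := by
    intro U V W hUV hVU hWV hVW
    obtain ⟨u, hu, huV⟩ := Set.not_subset.mp hUV
    obtain ⟨x, hx, hxU⟩ := Set.not_subset.mp hVU
    obtain ⟨w, hw, hwV⟩ := Set.not_subset.mp hWV
    obtain ⟨y, hy, hyW⟩ := Set.not_subset.mp hVW
    have hux : u ≠ x := fun h => huV (h ▸ hx)
    have hwy : w ≠ y := fun h => hwV (h ▸ hy)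
    have hxy : x = y := by
      by_contra hne
      have huy : u = y := key2 u y x hux (fun h => hne (h.symm))
      exact huV (huy ▸ hy)
    have huw : u = w := key2 u w x hux (hxy ▸ hwy)
    ext z
    rcases eq_or_ne z x with rfl | hzx
    · exact ⟨fun h => absurd h hxU, fun h => absurd h (hxy ▸ hyW)⟩
    · have hzu : z = u := key2 z u x hzx hux
      subst hzu
      exact ⟨fun _ => by rw [huw]; exact hw, fun _ => hu⟩
  -- the one-step map on sets of states
  set hh : Set X → Set X := fun V => {x | ∃ Z ∈ δ x a0, Z ⊆ V} with hhdef
  have hhmono : ∀ {U V : Set X}, U ⊆ V → hh U ⊆ hh V := by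
    rintro U V hUV x ⟨Z, hZ, hZU⟩
    exact ⟨Z, hZ, hZU.trans hUV⟩
  have hhiter : ∀ (k : ℕ) {U V : Set X}, U ⊆ V → hh^[k] U ⊆ hh^[k] V := by
    intro k
    induction k with
    | zero => intro U V h; simpa using h
    | succ k ih =>
      intro U V h
      rw [Function.iterate_succ_apply', Function.iterate_succ_apply']
      exact hhmono (ih h)
  -- acceptance through configurations
  have step_iff : ∀ (U : Set (Set X)) (V : Set X),
      (∃ S ∈ afaStep δ U a0, S ⊆ V) ↔ (∃ S ∈ U, S ⊆ hh V) := by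
    intro U V
    constructor
    · rintro ⟨S, ⟨W, hW, hWS⟩, hSV⟩
      refine ⟨W, hW, fun x hx => ?_⟩
      obtain ⟨Z, hZ, hZS⟩ := hWS x hx
      exact ⟨Z, hZ, hZS.trans hSV⟩
    · rintro ⟨S, hS, hShV⟩
      exact ⟨V, ⟨S, hS, fun x hx => hShV hx⟩, subset_rfl⟩
  have conf_iff : ∀ (n : ℕ) (V : Set X),
      (∃ S ∈ afaConf δ I (List.replicate n a0), S ⊆ V) ↔ ∃ S ∈ I, S ⊆ hh^[n] V := by
    intro n
    induction n with
    | zero => intro V; simp [afaConf]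
    | succ n ih =>
      intro V
      have hrep : List.replicate (n + 1) a0 = List.replicate n a0 ++ [a0] :=
        List.replicate_succ'
      have hconf : afaConf δ I (List.replicate (n + 1) a0)
          = afaStep δ (afaConf δ I (List.replicate n a0)) a0 := by
        rw [hrep]; simp [afaConf, List.foldl_append]
      rw [hconf, step_iff, ih (hh V), Function.iterate_succ_apply]
  -- the orbit of F
  set v : ℕ → Set X := fun n => hh^[n] F with hvdef
  have vadd : ∀ (k n : ℕ), v (n + k) = hh^[k] (v n) := by
    intro k n
    simp only [hvdef]
    rw [add_comm, Function.iterate_add_apply]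
  set Q : Set X → Prop := fun V => ∃ S ∈ I, S ⊆ V with hQdef
  have Qmono : ∀ {V V' : Set X}, V ⊆ V' → Q V → Q V' := by
    rintro V V' hVV' ⟨S, hS, hSV⟩
    exact ⟨S, hS, hSV.trans hVV'⟩
  have hQ : ∀ n : ℕ, Q (v n) ↔ (0 < n ∧ Even n) := by
    intro n
    have := Set.ext_iff.mp heq (List.replicate n a0)
    simp only [Set.mem_setOf_eq, List.length_replicate] at this
    rw [conf_iff n F] at this
    exact this
  -- rephrase parity via mod 2
  have hQ' : ∀ n : ℕ, Q (v n) ↔ (0 < n ∧ n % 2 = 0) := by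
    intro n
    rw [hQ n, Nat.even_iff]
  -- Lemma A : no increasing step
  have lemA : ∀ n : ℕ, v n ⊆ v (n + 1) → False := by
    intro n hsub
    have hprop : v (2 * n + 2) ⊆ v (2 * n + 3) := by
      have := hhiter (n + 2) hsub
      rw [← vadd (n + 2) n, ← vadd (n + 2) (n + 1)] at this
      have e1 : n + (n + 2) = 2 * n + 2 := by ring
      have e2 : n + 1 + (n + 2) = 2 * n + 3 := by ring
      rwa [e1, e2] at this
    have h1 : Q (v (2 * n + 2)) := (hQ' _).mpr ⟨by omega, by omega⟩
    have h2 := (hQ' (2 * n + 3)).mp (Qmono hprop h1)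
    omega
  -- Lemma B : no decreasing step
  have lemB : ∀ n : ℕ, v (n + 1) ⊆ v n → False := by
    intro n hsub
    have hprop : v (2 * n + 4) ⊆ v (2 * n + 3) := by
      have := hhiter (n + 3) hsub
      rw [← vadd (n + 3) (n + 1), ← vadd (n + 3) n] at this
      have e1 : n + 1 + (n + 3) = 2 * n + 4 := by ring
      have e2 : n + (n + 3) = 2 * n + 3 := by ring
      rwa [e1, e2] at this
    have h1 : Q (v (2 * n + 4)) := (hQ' _).mpr ⟨by omega, by omega⟩
    have h2 := (hQ' (2 * n + 3)).mp (Qmono hprop h1)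
    omega
  -- final case analysis on comparability of (v 0, v 1) and (v 1, v 2)
  by_cases h01 : v 0 ⊆ v 1
  · exact lemA 0 h01
  by_cases h10 : v 1 ⊆ v 0
  · exact lemB 0 h10
  by_cases h12 : v 1 ⊆ v 2
  · exact lemA 1 h12
  by_cases h21 : v 2 ⊆ v 1
  · exact lemB 1 h21
  have h02 : v 0 = v 2 := L2 (v 0) (v 1) (v 2) h01 h10 h21 h12
  have hq2 : Q (v 2) := (hQ' 2).mpr ⟨by omega, by omega⟩
  have hq0 := (hQ' 0).mp (h02 ▸ hq2)
  omega
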